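/- Let q be a prime, 0 < α < 1, and for natural numbers n ≥ 1 and 0 ≤ p ≤ q − 1 let Fₙ(q,p) = {x ∈ {0,1}^ℕ : d_{qⁿ−2}(x) ≡ p (mod q)}. Then for every fixed m ≥ 1 and all p, r ∈ {0, …, q − 1}, lim_{n→∞} μ_α(Fₙ(q,p) ∩ F_m(q,r)) = (1/q) · μ_α(F_m(q,r)). -/

import Mathlib

open MeasureTheory Filter

/-- `kₙ(x)`: the number of `1`s among the first `n` coordinates of the path `x`. -/
def kpath (x : ℕ → Bool) (n : ℕ) : ℕ :=
  ((Finset.range n).filter (fun i => x i = true)).card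

/-- `dₙ(x) = C(n, kₙ(x))`: the binomial coefficient at the `n`-th vertex of the
path in Pascal's triangle determined by `x`. -/
def dpath (n : ℕ) (x : ℕ → Bool) : ℕ := n.choose (kpath x n)

/-- `μ` is the Bernoulli product measure `μ_α` on `{0,1}^ℕ`: it is a probability
measure under which the coordinates are i.i.d. with probability `α` of being `1`. -/
def IsBernoulli (α : ℝ) (μ : Measure (ℕ → Bool)) : Prop :=
  IsProbabilityMeasure μ ∧
    ∀ (s : Finset ℕ) (y : ℕ → Bool),
      μ {x : ℕ → Bool | ∀ i ∈ s, x i = y i} =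
        ∏ i ∈ s, (if y i = true then ENNReal.ofReal α else ENNReal.ofReal (1 - α))

/-- `Fₙ(q,p)`: the set of paths whose binomial coefficient at level `qⁿ − 2`
is congruent to `p` modulo `q`. -/
def F (q n p : ℕ) : Set (ℕ → Bool) :=
  {x : ℕ → Bool | ((dpath (q ^ n - 2) x : ℕ) : ZMod q) = (p : ZMod q)}


open Finset

section NT
variable (q : ℕ) [Fact q.Prime]

lemma cast_ne_zero_of_lt {a : ℕ} (ha0 : 0 < a) (ha : a < q) : ((a : ℕ) : ZMod q) ≠ 0 := by
  rw [Ne, ZMod.natCast_eq_zero_iff]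
  exact fun hdvd => absurd (Nat.le_of_dvd ha0 hdvd) (by omega)

lemma lucas (n k : ℕ) :
    ((n.choose k : ℕ) : ZMod q) = (((n % q).choose (k % q) : ℕ) : ZMod q) * (((n / q).choose (k / q) : ℕ) : ZMod q) := by
  have := (Choose.choose_modEq_choose_mod_mul_choose_div_nat (p := q) (n := n) (k := k))
  rw [← ZMod.natCast_eq_natCast_iff] at this
  push_cast at this
  exact this

lemma choose_qsub1 : ∀ a, a < q → ((Nat.choose (q-1) a : ℕ) : ZMod q) = (-1)^a := by
  intro a
  induction a with
  | zero => intro _; simp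
  | succ a ih =>
    intro ha
    have hq2 := (Fact.out : q.Prime).two_le
    have key : (q-1).choose (a+1) * (a+1) = (q-1).choose a * (q-1-a) := Nat.choose_succ_right_eq _ _
    have hcast : ((q - 1 - a : ℕ) : ZMod q) = -((a : ZMod q)+1) := by
      have h1 : q - 1 - a = q - (a+1) := by omega
      rw [h1, Nat.cast_sub (by omega)]
      push_cast; simp
    have h2 := congrArg (fun x : ℕ => (x : ZMod q)) key
    push_cast at h2
    rw [hcast, ih (by omega)] at h2
    have hne : ((a : ZMod q)+1) ≠ 0 := by
      have := cast_ne_zero_of_lt q (a := a+1) (by omega) (by omega)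
      push_cast at this; exact this
    apply mul_right_cancel₀ hne
    push_cast
    rw [h2]; ring

lemma choose_qsub2 : ∀ a, a < q → ((Nat.choose (q-2) a : ℕ) : ZMod q) = (-1)^a * ((a : ZMod q)+1) := by
  intro a
  induction a with
  | zero => intro _; simp
  | succ a ih =>
    intro ha
    have hq2 := (Fact.out : q.Prime).two_le
    have key : (q-2).choose (a+1) * (a+1) = (q-2).choose a * (q-2-a) := Nat.choose_succ_right_eq _ _
    have hcast : ((q - 2 - a : ℕ) : ZMod q) = -((a : ZMod q)+2) := by
      have h1 : q - 2 - a = q - (a+2) := by omega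
      rw [h1]
      rcases Nat.lt_or_ge (a+2) q with h2 | h2
      · rw [Nat.cast_sub (by omega)]; push_cast; simp
      · have h3 : q - (a+2) = 0 := by omega
        have h4 : a + 2 = q := by omega
        rw [h3]
        have : ((a : ZMod q)+2) = ((a+2 : ℕ) : ZMod q) := by push_cast; ring
        rw [this, h4, ZMod.natCast_self]
        simp
    have h2 := congrArg (fun x : ℕ => (x : ZMod q)) key
    push_cast at h2
    rw [hcast, ih (by omega)] at h2
    have hne : ((a : ZMod q)+1) ≠ 0 := by
      have := cast_ne_zero_of_lt q (a := a+1) (by omega) (by omega)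
      push_cast at this; exact this
    apply mul_right_cancel₀ hne
    push_cast
    rw [h2]; ring

lemma neg_one_pow_q : (-1 : ZMod q)^q = -1 := by
  rcases (Fact.out : q.Prime).eq_two_or_odd' with h | h
  · subst h
    have h1 : (-1 : ZMod 2) = 1 := rfl
    rw [h1, one_pow]
  · exact h.neg_one_pow

lemma choose_pow_sub_one : ∀ M j, j < q^M → ((Nat.choose (q^M - 1) j : ℕ) : ZMod q) = (-1)^j := by
  intro M
  induction M with
  | zero =>
    intro j hj
    simp only [pow_zero] at hj
    have : j = 0 := by omega
    subst this; simp
  | succ M ih =>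
    intro j hj
    have hq2 := (Fact.out : q.Prime).two_le
    have hqM : 1 ≤ q^M := Nat.one_le_pow _ _ (by omega)
    have hA : q^(M+1) = q * q^M := by ring
    have h3 : q ≤ q^(M+1) := Nat.le_self_pow (by omega) q
    have hmulsub : q * (q^M - 1) = q^(M+1) - q := by
      rw [Nat.mul_sub, mul_one, hA]
    have hrep : q^(M+1) - 1 = q * (q^M - 1) + (q - 1) := by omega
    have hdiv1 : (q^(M+1) - 1) / q = q^M - 1 := by
      rw [hrep, Nat.mul_add_div (by omega), Nat.div_eq_of_lt (by omega), Nat.add_zero]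
    have hdiv2 : (q^(M+1) - 1) % q = q - 1 := by
      rw [hrep, Nat.mul_add_mod, Nat.mod_eq_of_lt (by omega)]
    have hjq : j / q < q ^ M := by
      rw [Nat.div_lt_iff_lt_mul (by omega)]
      calc j < q^(M+1) := hj
        _ = q^M * q := by ring
    conv_rhs => rw [← Nat.mod_add_div j q, pow_add, pow_mul, neg_one_pow_q]
    rw [lucas q, hdiv1, hdiv2, choose_qsub1 q _ (Nat.mod_lt _ (by omega)), ih _ hjq]
end NT

section NT2
variable (q : ℕ) [Fact q.Prime]

lemma keyA (n k : ℕ) (hn : 1 ≤ n) (hk : k < q^n) :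
    ((Nat.choose (q^n - 2) k : ℕ) : ZMod q) = (-1)^k * ((k : ZMod q) + 1) := by
  have hq2 := (Fact.out : q.Prime).two_le
  obtain ⟨N, rfl⟩ : ∃ N, n = N + 1 := ⟨n - 1, by omega⟩
  have hqN : 1 ≤ q^N := Nat.one_le_pow _ _ (by omega)
  have hA : q^(N+1) = q * q^N := by ring
  have h3 : q ≤ q^(N+1) := Nat.le_self_pow (by omega) q
  have hmulsub : q * (q^N - 1) = q^(N+1) - q := by rw [Nat.mul_sub, mul_one, hA]
  have hrep : q^(N+1) - 2 = q * (q^N - 1) + (q - 2) := by omega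
  have hdiv1 : (q^(N+1) - 2) / q = q^N - 1 := by
    rw [hrep, Nat.mul_add_div (by omega), Nat.div_eq_of_lt (by omega), Nat.add_zero]
  have hdiv2 : (q^(N+1) - 2) % q = q - 2 := by
    rw [hrep, Nat.mul_add_mod, Nat.mod_eq_of_lt (by omega)]
  have hjq : k / q < q ^ N := by
    rw [Nat.div_lt_iff_lt_mul (by omega)]
    calc k < q^(N+1) := hk
      _ = q^N * q := by ring
  have hmodcast : ((k % q : ℕ) : ZMod q) = (k : ZMod q) := ZMod.natCast_mod k q
  have hpow : ((-1 : ZMod q))^k = (-1)^(k % q) * (-1)^(k / q) := by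
    conv_lhs => rw [← Nat.mod_add_div k q]
    rw [pow_add, pow_mul, neg_one_pow_q]
  rw [lucas q, hdiv1, hdiv2, choose_qsub2 q _ (Nat.mod_lt _ (by omega)),
    choose_pow_sub_one q _ _ hjq, hmodcast, hpow]
  ring
end NT2

section CNT
open Finset

def ft (q : ℕ) (t : ZMod (2*q)) : ZMod q :=
  (-1 : ZMod q)^(t.val) * ((t.val : ZMod q) + 1)

def Pz (q p : ℕ) (z : ZMod 2 × ZMod q) : Prop :=
  (if z.1 = 0 then (1:ZMod q) else -1) * (z.2 + 1) = (p : ZMod q)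

instance (q p : ℕ) : DecidablePred (Pz q p) := fun z => by unfold Pz; infer_instance

lemma card_sol_two (p : ℕ) (hp : p ≤ 1) :
    (Finset.univ.filter (fun t : ZMod (2*2) => ft 2 t = (p : ZMod 2))).card = 2 := by
  interval_cases p <;> decide

variable (q : ℕ) [Fact q.Prime] [instL : NeZero (2*q)]

omit instL in
lemma ft_cast (k : ℕ) : ft q ((k : ZMod (2*q))) = (-1 : ZMod q)^k * ((k : ZMod q) + 1) := by
  have hq2 := (Fact.out : q.Prime).two_le
  haveI : NeZero (2*q) := ⟨by omega⟩
  unfold ft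
  rw [ZMod.val_natCast]
  have he : ((-1 : ZMod q))^(2*q) = 1 := Even.neg_one_pow ⟨q, by ring⟩
  have h1 : ((-1 : ZMod q))^(k % (2*q)) = (-1)^k := by
    conv_rhs => rw [← Nat.mod_add_div k (2*q)]
    rw [pow_add, pow_mul, he, one_pow, mul_one]
  have h2 : ((k % (2*q) : ℕ) : ZMod q) = (k : ZMod q) := by
    conv_rhs => rw [← Nat.mod_add_div k (2*q)]
    push_cast [ZMod.natCast_self]
    ring
  rw [h1, h2]

lemma card_sol (p : ℕ) (hp : p ≤ q - 1) :
    (Finset.univ.filter (fun t : ZMod (2*q) => ft q t = (p : ZMod q))).card = 2 := by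
  have hq2 := (Fact.out : q.Prime).two_le
  rcases (Fact.out : q.Prime).eq_two_or_odd' with h2 | hodd
  · subst h2
    exact card_sol_two p hp
  · -- q odd
    set π : ZMod (2*q) → ZMod 2 × ZMod q := fun t => (((t.val : ℕ) : ZMod 2), ((t.val : ℕ) : ZMod q)) with hπ
    have hinj : Function.Injective π := by
      intro t s hts
      have h1 : t.val ≡ s.val [MOD 2] := by
        have h := congrArg Prod.fst hts
        exact (ZMod.natCast_eq_natCast_iff _ _ _).mp h
      have h2 : t.val ≡ s.val [MOD q] := by
        have h := congrArg Prod.snd hts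
        exact (ZMod.natCast_eq_natCast_iff _ _ _).mp h
      have h3 : t.val ≡ s.val [MOD 2*q] :=
        (Nat.modEq_and_modEq_iff_modEq_mul (Nat.coprime_two_left.mpr hodd)).mp ⟨h1, h2⟩
      have ht := ZMod.val_lt t
      have hs := ZMod.val_lt s
      have hval : t.val = s.val := by
        have h4 := h3
        unfold Nat.ModEq at h4
        rwa [Nat.mod_eq_of_lt ht, Nat.mod_eq_of_lt hs] at h4
      exact ZMod.val_injective _ hval
    have hbij : Function.Bijective π := by
      rw [Fintype.bijective_iff_injective_and_card]
      refine ⟨hinj, ?_⟩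
      simp [ZMod.card]
    have hcond : ∀ t : ZMod (2*q), ft q t = (p : ZMod q) ↔ Pz q p (π t) := by
      intro t
      have hsgn : ((-1 : ZMod q))^(t.val) = (if ((t.val : ℕ) : ZMod 2) = 0 then (1:ZMod q) else -1) := by
        rcases Nat.even_or_odd t.val with he | ho
        · rw [he.neg_one_pow, if_pos (by rw [ZMod.natCast_eq_zero_iff]; exact he.two_dvd)]
        · have hne : ((t.val : ℕ) : ZMod 2) ≠ 0 := by
            rw [Ne, ZMod.natCast_eq_zero_iff]
            exact fun h => (Nat.not_even_iff_odd.mpr ho) (even_iff_two_dvd.mpr h)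
          rw [ho.neg_one_pow, if_neg hne]
      unfold ft Pz
      rw [hsgn]
    have hcard : (Finset.univ.filter (fun t : ZMod (2*q) => ft q t = (p : ZMod q))).card
        = (Finset.univ.filter (Pz q p)).card := by
      apply Finset.card_bij (fun t _ => π t)
      · intro t ht
        simp only [Finset.mem_filter, Finset.mem_univ, true_and] at ht ⊢
        exact (hcond t).mp ht
      · intro t _ s _ h
        exact hinj h
      · intro z hz
        obtain ⟨t, rfl⟩ := hbij.2 z
        refine ⟨t, ?_, rfl⟩
        simp only [Finset.mem_filter, Finset.mem_univ, true_and] at hz ⊢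
        exact (hcond t).mpr hz
    rw [hcard]
    have h01 : (0 : ZMod 2) ≠ 1 := by decide
    have hset : Finset.univ.filter (Pz q p) = {((0 : ZMod 2), (p : ZMod q) - 1), ((1 : ZMod 2), -(p : ZMod q) - 1)} := by
      ext z
      obtain ⟨ε, u⟩ := z
      have hε : ε = 0 ∨ ε = 1 := by revert ε; decide
      simp only [Finset.mem_filter, Finset.mem_univ, true_and, Finset.mem_insert,
        Finset.mem_singleton, Prod.mk.injEq]
      unfold Pz
      rcases hε with rfl | rfl
      · rw [if_pos rfl, one_mul]
        constructor
        · intro h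
          exact Or.inl ⟨rfl, by linear_combination h⟩
        · rintro (⟨-, rfl⟩ | ⟨h0, -⟩)
          · ring
          · exact absurd h0 h01
      · rw [if_neg (show ¬(((1:ZMod 2), u).1 = 0) from fun h => h01 h.symm)]
        constructor
        · intro h
          exact Or.inr ⟨rfl, by linear_combination -h⟩
        · rintro (⟨h0, -⟩ | ⟨-, rfl⟩)
          · exact absurd h0.symm h01
          · ring
    rw [hset]
    rw [Finset.card_insert_of_notMem, Finset.card_singleton]
    simp only [Finset.mem_singleton, Prod.mk.injEq, not_and]
    intro h0
    exact absurd h0 h01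
end CNT

open Filter MeasureTheory
open scoped ENNReal


section GG
variable {R : Type*} [CommSemiring R] (a b : R) (L : ℕ) [NeZero L]

def gg : ℕ → ZMod L → R
  | 0, t => if t = 0 then 1 else 0
  | s+1, t => gg s t * b + gg s (t-1) * a

lemma gg_sum (s : ℕ) : ∑ t : ZMod L, gg a b L s t = (a + b)^s := by
  induction s with
  | zero => simp [gg]
  | succ s ih =>
    simp only [gg]
    rw [Finset.sum_add_distrib, ← Finset.sum_mul, ← Finset.sum_mul, ih]
    have h2 : ∑ t : ZMod L, gg a b L s (t - 1) = (a+b)^s := by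
      rw [← ih]
      exact Fintype.sum_equiv (Equiv.subRight (1 : ZMod L)) _ _ (fun t => rfl)
    rw [h2]
    ring

lemma gg_conv (s r : ℕ) (e : ZMod L) :
    gg a b L (s + r) e = ∑ f : ZMod L, gg a b L r f * gg a b L s (e - f) := by
  induction r generalizing e with
  | zero =>
    rw [Nat.add_zero]
    rw [Finset.sum_eq_single (0 : ZMod L)]
    · simp [gg]
    · intro f _ hf
      simp [gg, hf]
    · simp
  | succ r ih =>
    have : s + (r + 1) = (s + r) + 1 := by ring
    rw [this]
    simp only [gg]
    rw [ih, ih, Finset.sum_mul, Finset.sum_mul]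
    have h2 : ∑ f : ZMod L, gg a b L r f * gg a b L s (e - 1 - f) * a
        = ∑ f : ZMod L, gg a b L r (f - 1) * gg a b L s (e - f) * a := by
      apply Fintype.sum_equiv (Equiv.addRight (1 : ZMod L))
      intro f
      simp only [Equiv.coe_addRight, add_sub_cancel_right]
      ring_nf
    rw [h2, ← Finset.sum_add_distrib]
    apply Finset.sum_congr rfl
    intro f _
    ring
end GG

section GGR

lemma gg_nonneg (a b : ℝ) (ha : 0 ≤ a) (hb : 0 ≤ b) (L : ℕ) [NeZero L] (s : ℕ) (e : ZMod L) :
    0 ≤ gg a b L s e := by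
  induction s generalizing e with
  | zero =>
    simp only [gg]
    split <;> norm_num
  | succ s ih =>
    simp only [gg]
    exact add_nonneg (mul_nonneg (ih _) hb) (mul_nonneg (ih _) ha)

lemma gg_lb (a b : ℝ) (ha : 0 ≤ a) (hb : 0 ≤ b) (L : ℕ) [NeZero L] :
    ∀ s : ℕ, ∀ e : ZMod L, e.val ≤ s → a^(e.val) * b^(s - e.val) ≤ gg a b L s e := by
  intro s
  induction s with
  | zero =>
    intro e he
    have h0 : e = 0 := by
      have hv : e.val = 0 := by omega
      exact (ZMod.val_eq_zero e).mp hv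
    subst h0
    simp only [gg, ZMod.val_zero, if_pos rfl]
    norm_num
  | succ s ih =>
    intro e he
    rcases Nat.eq_zero_or_pos e.val with h0 | hpos
    · have he0 : e = 0 := (ZMod.val_eq_zero e).mp h0
      subst he0
      simp only [gg, ZMod.val_zero, pow_zero, one_mul, Nat.sub_zero]
      calc b^(s+1) = b^s * b := by ring
        _ ≤ gg a b L s 0 * b := by
            have := ih 0 (by simp [ZMod.val_zero])
            simp only [ZMod.val_zero, pow_zero, one_mul, Nat.sub_zero] at this
            exact mul_le_mul_of_nonneg_right this hb
        _ ≤ gg a b L s 0 * b + gg a b L s (0 - 1) * a := by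
            have h1 := gg_nonneg a b ha hb L s (0 - 1)
            nlinarith
    · have hvlt : e.val < L := ZMod.val_lt e
      have hsub : (e - 1).val = e.val - 1 := by
        have h1 : e - 1 = ((e.val - 1 : ℕ) : ZMod L) := by
          have h2 : ((e.val : ℕ) : ZMod L) = e := ZMod.natCast_rightInverse e
          rw [Nat.cast_sub hpos, h2, Nat.cast_one]
        rw [h1, ZMod.val_natCast, Nat.mod_eq_of_lt (by omega)]
      have hd : (e - 1).val ≤ s := by omega
      have hih := ih (e - 1) hd
      rw [hsub] at hih
      simp only [gg]
      calc a^(e.val) * b^(s+1-e.val) = a^((e.val - 1)+1) * b^(s - (e.val - 1)) := by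
            have h1 : e.val = (e.val - 1) + 1 := by omega
            have h2 : s + 1 - e.val = s - (e.val - 1) := by omega
            rw [h2, ← h1]
        _ = (a^(e.val - 1) * b^(s - (e.val - 1))) * a := by rw [pow_succ]; ring
        _ ≤ gg a b L s (e - 1) * a := mul_le_mul_of_nonneg_right hih ha
        _ ≤ gg a b L s e * b + gg a b L s (e - 1) * a := by
            have h1 := gg_nonneg a b ha hb L s e
            nlinarith

end GGR

section CONVR
variable (L : ℕ) [NeZero L]

lemma conv_real (α : ℝ) (hα0 : 0 < α) (hα1 : α < 1)
    (Ur : ZMod L → ℝ) (hnn : ∀ e, 0 ≤ Ur e) (t : ZMod L) :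
    Tendsto (fun s => ∑ e : ZMod L, gg α (1-α) L s e * Ur (t - e)) atTop
      (nhds ((∑ e : ZMod L, Ur e) / L)) := by
  have hL : 0 < L := Nat.pos_of_ne_zero (NeZero.ne L)
  have hα1' : 0 < 1 - α := by linarith
  set G : ℕ → ZMod L → ℝ := gg α (1-α) L with hG
  have hGnn : ∀ s e, 0 ≤ G s e := fun s e => gg_nonneg α (1-α) hα0.le hα1'.le L s e
  have hG1 : ∀ s, ∑ e : ZMod L, G s e = 1 := by
    intro s; rw [hG, gg_sum]; norm_num
  set Totr : ℝ := ∑ e : ZMod L, Ur e with hTotr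
  set v : ℕ → ZMod L → ℝ := fun s τ => ∑ e : ZMod L, G s e * Ur (τ - e) with hv
  have hne : (Finset.univ : Finset (ZMod L)).Nonempty := Finset.univ_nonempty
  have hconv : ∀ s r τ, v (s+r) τ = ∑ f : ZMod L, G r f * v s (τ - f) := by
    intro s r τ
    simp only [hv]
    have h1 : ∀ e : ZMod L, G (s+r) e * Ur (τ - e) = ∑ f : ZMod L, G r f * G s (e - f) * Ur (τ - e) := by
      intro e
      rw [hG, gg_conv, Finset.sum_mul]
    rw [Finset.sum_congr rfl (fun e _ => h1 e), Finset.sum_comm]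
    apply Finset.sum_congr rfl
    intro f _
    rw [Finset.mul_sum]
    apply Fintype.sum_equiv (Equiv.subRight f)
    intro e
    simp only [Equiv.subRight_apply]
    have h2 : τ - f - (e - f) = τ - e := by ring
    rw [h2]
    ring
  have hrow : ∀ s (τ : ZMod L), ∑ f : ZMod L, v s (τ - f) = Totr := by
    intro s τ
    have h1 : ∀ (w : ZMod L → ℝ) (c : ZMod L), ∑ f : ZMod L, w (c - f) = ∑ f, w f :=
      fun w c => Fintype.sum_equiv (Equiv.subLeft c) _ _ (fun f => rfl)
    rw [h1 (v s) τ]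
    -- now ∑ τ, v s τ = Totr
    simp only [hv]
    rw [Finset.sum_comm]
    have h2 : ∀ e : ZMod L, ∑ τ : ZMod L, G s e * Ur (τ - e) = G s e * Totr := by
      intro e
      rw [← Finset.mul_sum, hTotr]
      congr 1
      exact Fintype.sum_equiv (Equiv.subRight e) _ _ (fun τ => by simp)
    rw [Finset.sum_congr rfl (fun e _ => h2 e), ← Finset.sum_mul, hG1, one_mul]
  set Mx : ℕ → ℝ := fun s => Finset.univ.sup' hne (v s) with hMx
  set mn : ℕ → ℝ := fun s => Finset.univ.inf' hne (v s) with hmn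
  have hle_Mx : ∀ s τ, v s τ ≤ Mx s := fun s τ => Finset.le_sup' _ (Finset.mem_univ τ)
  have hmn_le : ∀ s τ, mn s ≤ v s τ := fun s τ => Finset.inf'_le _ (Finset.mem_univ τ)
  set osc : ℕ → ℝ := fun s => Mx s - mn s with hosc
  have hoscnn : ∀ s, 0 ≤ osc s := by
    intro s
    have := (hmn_le s 0).trans (hle_Mx s 0)
    simp only [hosc]; linarith
  have hbnd : ∀ (s r : ℕ) (c : ℝ), (∀ f, c ≤ G r f) → osc (s + r) ≤ (1 - L * c) * osc s := by
    intro s r c hc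
    have hdiff : ∀ τ τ', v (s+r) τ - v (s+r) τ' ≤ (1 - L * c) * osc s := by
      intro τ τ'
      rw [hconv s r τ, hconv s r τ', ← Finset.sum_sub_distrib]
      have hzero : ∑ f : ZMod L, (v s (τ - f) - v s (τ' - f)) = 0 := by
        rw [Finset.sum_sub_distrib, hrow, hrow, sub_self]
      have hsplit : ∑ f : ZMod L, (G r f * v s (τ - f) - G r f * v s (τ' - f))
          = ∑ f : ZMod L, (G r f - c) * (v s (τ - f) - v s (τ' - f))
            + c * ∑ f : ZMod L, (v s (τ - f) - v s (τ' - f)) := by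
        rw [Finset.mul_sum, ← Finset.sum_add_distrib]
        apply Finset.sum_congr rfl
        intro f _
        ring
      rw [hsplit, hzero, mul_zero, add_zero]
      calc ∑ f : ZMod L, (G r f - c) * (v s (τ - f) - v s (τ' - f))
          ≤ ∑ f : ZMod L, (G r f - c) * osc s := by
            apply Finset.sum_le_sum
            intro f _
            apply mul_le_mul_of_nonneg_left _ (by linarith [hc f])
            have h1 := hle_Mx s (τ - f)
            have h2 := hmn_le s (τ' - f)
            simp only [hosc]; linarith
        _ = (1 - L * c) * osc s := by
            rw [← Finset.sum_mul]
            congr 1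
            rw [Finset.sum_sub_distrib, hG1, Finset.sum_const, Finset.card_univ, ZMod.card]
            simp [nsmul_eq_mul]
    obtain ⟨τ1, -, hτ1⟩ := Finset.exists_mem_eq_sup' hne (v (s+r))
    obtain ⟨τ2, -, hτ2⟩ := Finset.exists_mem_eq_inf' hne (v (s+r))
    have : osc (s+r) = v (s+r) τ1 - v (s+r) τ2 := by
      simp only [hosc, hMx, hmn]
      rw [hτ1, hτ2]
    rw [this]
    exact hdiff τ1 τ2
  set εr : ℝ := (min α (1-α))^L with hεr
  have hεpos : 0 < εr := pow_pos (lt_min hα0 hα1') L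
  have hGeps : ∀ f : ZMod L, εr ≤ G L f := by
    intro f
    have hval : f.val < L := ZMod.val_lt f
    have hmin0 : 0 ≤ min α (1-α) := le_min hα0.le hα1'.le
    have h5 : f.val + (L - f.val) = L := by omega
    calc εr = (min α (1-α))^(f.val) * (min α (1-α))^(L - f.val) := by
          rw [hεr, ← pow_add, h5]
      _ ≤ α^(f.val) * (1-α)^(L - f.val) := by
          apply mul_le_mul (pow_le_pow_left₀ hmin0 (min_le_left _ _) _)
            (pow_le_pow_left₀ hmin0 (min_le_right _ _) _)
            (pow_nonneg hmin0 _) (pow_nonneg hα0.le _)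
      _ ≤ G L f := gg_lb α (1-α) hα0.le hα1'.le L L f hval.le
  set ρ : ℝ := 1 - L * εr with hρ
  have hρ0 : 0 ≤ ρ := by
    have h1 : (L : ℝ) * εr = ∑ _f : ZMod L, εr := by
      rw [Finset.sum_const, Finset.card_univ, ZMod.card, nsmul_eq_mul]
    have h2 : ∑ _f : ZMod L, εr ≤ ∑ f : ZMod L, G L f :=
      Finset.sum_le_sum (fun f _ => hGeps f)
    rw [hG1] at h2
    simp only [hρ]; linarith
  have hρ1 : ρ < 1 := by
    have : 0 < (L:ℝ) * εr := by positivity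
    simp only [hρ]; linarith
  have hdecay : ∀ n, osc n ≤ ρ^(n / L) * osc 0 := by
    intro n
    induction n using Nat.strong_induction_on with
    | _ n ih =>
      by_cases hn : n < L
      · rw [Nat.div_eq_of_lt hn, pow_zero, one_mul]
        have := hbnd 0 n 0 (fun f => hGnn n f)
        simp only [mul_zero, sub_zero, one_mul, Nat.zero_add] at this
        exact this
      · push_neg at hn
        have hrec : n = (n - L) + L := by omega
        have h1 : osc n ≤ ρ * osc (n - L) := by
          have hb := hbnd (n - L) L εr hGeps
          rw [← hrec] at hb
          exact hb.trans_eq (by rw [hρ])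
        have h2 := ih (n - L) (by omega)
        have h3 : n / L = (n - L) / L + 1 := by
          conv_lhs => rw [hrec]
          rw [Nat.add_div_right _ hL]
        calc osc n ≤ ρ * osc (n - L) := h1
          _ ≤ ρ * (ρ^((n-L)/L) * osc 0) := by
              apply mul_le_mul_of_nonneg_left h2 hρ0
          _ = ρ^(n/L) * osc 0 := by rw [h3, pow_succ]; ring
  have hdivtend : Tendsto (fun n : ℕ => n / L) atTop atTop := by
    apply tendsto_atTop_atTop.mpr
    intro K
    refine ⟨K * L, fun n hn => ?_⟩
    rw [Nat.le_div_iff_mul_le hL]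
    exact hn
  have hpowtend : Tendsto (fun n : ℕ => ρ^(n / L) * osc 0) atTop (nhds 0) := by
    have h1 : Tendsto (fun n : ℕ => ρ^(n / L)) atTop (nhds 0) :=
      (tendsto_pow_atTop_nhds_zero_of_lt_one hρ0 hρ1).comp hdivtend
    have := h1.mul_const (osc 0)
    rwa [zero_mul] at this
  have htend0 : Tendsto osc atTop (nhds 0) := squeeze_zero hoscnn hdecay hpowtend
  have hmid : ∀ s, mn s ≤ Totr / L ∧ Totr / L ≤ Mx s := by
    intro s
    have hsum : ∑ τ : ZMod L, v s τ = Totr := by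
      have h9 := hrow s 0
      simp only [zero_sub] at h9
      rw [← h9]
      exact Fintype.sum_equiv (Equiv.neg (ZMod L)) _ _ (fun τ => by simp)
    constructor
    · rw [le_div_iff₀ (by positivity : (0:ℝ) < (L:ℝ))]
      have h1 : ∑ τ : ZMod L, mn s ≤ ∑ τ : ZMod L, v s τ :=
        Finset.sum_le_sum (fun τ _ => hmn_le s τ)
      rw [hsum, Finset.sum_const, Finset.card_univ, ZMod.card, nsmul_eq_mul] at h1
      linarith [h1]
    · rw [div_le_iff₀ (by positivity : (0:ℝ) < (L:ℝ))]
      have h1 : ∑ τ : ZMod L, v s τ ≤ ∑ τ : ZMod L, Mx s :=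
        Finset.sum_le_sum (fun τ _ => hle_Mx s τ)
      rw [hsum, Finset.sum_const, Finset.card_univ, ZMod.card, nsmul_eq_mul] at h1
      linarith [h1]
  have hfin : ∀ s, ‖v s t - Totr / L‖ ≤ osc s := by
    intro s
    rw [Real.norm_eq_abs, abs_le]
    obtain ⟨h1, h2⟩ := hmid s
    have h3 := hle_Mx s t
    have h4 := hmn_le s t
    constructor <;> simp only [hosc] <;> linarith
  have h0 : Tendsto (fun s => v s t - Totr / L) atTop (nhds 0) :=
    squeeze_zero_norm hfin htend0
  have hfinal := h0.add_const (Totr / L)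
  simp only [sub_add_cancel, zero_add] at hfinal
  exact hfinal
end CONVR

section CONVE
open ENNReal

lemma gg_ne_top (a b : ℝ≥0∞) (ha : a ≠ ⊤) (hb : b ≠ ⊤) (L : ℕ) [NeZero L] (s : ℕ) (e : ZMod L) :
    gg a b L s e ≠ ⊤ := by
  induction s generalizing e with
  | zero =>
    simp only [gg]
    split <;> simp
  | succ s ih =>
    simp only [gg]
    exact ENNReal.add_ne_top.mpr ⟨ENNReal.mul_ne_top (ih _) hb, ENNReal.mul_ne_top (ih _) ha⟩

lemma gg_toReal (a b : ℝ≥0∞) (ha : a ≠ ⊤) (hb : b ≠ ⊤) (L : ℕ) [NeZero L] (s : ℕ) (e : ZMod L) :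
    (gg a b L s e).toReal = gg a.toReal b.toReal L s e := by
  induction s generalizing e with
  | zero =>
    simp only [gg]
    split <;> simp
  | succ s ih =>
    simp only [gg]
    rw [ENNReal.toReal_add (ENNReal.mul_ne_top (gg_ne_top a b ha hb L s _) hb)
      (ENNReal.mul_ne_top (gg_ne_top a b ha hb L s _) ha),
      ENNReal.toReal_mul, ENNReal.toReal_mul, ih, ih]

lemma conv_enn (L : ℕ) [NeZero L] (α : ℝ) (hα0 : 0 < α) (hα1 : α < 1)
    (u : ZMod L → ℝ≥0∞) (hu : ∀ e, u e ≤ 1) (t : ZMod L) :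
    Filter.Tendsto
      (fun s => ∑ e : ZMod L, gg (ENNReal.ofReal α) (ENNReal.ofReal (1-α)) L s e * u (t - e))
      Filter.atTop (nhds ((∑ e : ZMod L, u e) / (L : ℝ≥0∞))) := by
  have hL : 0 < L := Nat.pos_of_ne_zero (NeZero.ne L)
  set a := ENNReal.ofReal α with hadef
  set b := ENNReal.ofReal (1-α) with hbdef
  have ha : a ≠ ⊤ := ENNReal.ofReal_ne_top
  have hb : b ≠ ⊤ := ENNReal.ofReal_ne_top
  have hatr : a.toReal = α := ENNReal.toReal_ofReal hα0.le
  have hbtr : b.toReal = 1 - α := ENNReal.toReal_ofReal (by linarith)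
  have hu_ne : ∀ e, u e ≠ ⊤ := fun e => ne_top_of_le_ne_top ENNReal.one_ne_top (hu e)
  set Ur : ZMod L → ℝ := fun e => (u e).toReal with hUr
  have hUnn : ∀ e, 0 ≤ Ur e := fun e => ENNReal.toReal_nonneg
  have hbridge : ∀ s, (∑ e : ZMod L, gg a b L s e * u (t - e))
      = ENNReal.ofReal (∑ e : ZMod L, gg α (1-α) L s e * Ur (t - e)) := by
    intro s
    rw [ENNReal.ofReal_sum_of_nonneg]
    · apply Finset.sum_congr rfl
      intro e _
      rw [ENNReal.ofReal_mul (gg_nonneg α (1-α) hα0.le (by linarith) L s e)]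
      congr 1
      · rw [← hbtr, ← hatr, ← gg_toReal a b ha hb, ENNReal.ofReal_toReal (gg_ne_top a b ha hb L s e)]
      · rw [hUr, ENNReal.ofReal_toReal (hu_ne _)]
    · intro e _
      exact mul_nonneg (gg_nonneg α (1-α) hα0.le (by linarith) L s e) (hUnn _)
  have htarget : (∑ e : ZMod L, u e) / (L : ℝ≥0∞)
      = ENNReal.ofReal ((∑ e : ZMod L, Ur e) / L) := by
    rw [ENNReal.ofReal_div_of_pos (by positivity), ENNReal.ofReal_natCast,
      ENNReal.ofReal_sum_of_nonneg (fun e _ => hUnn e)]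
    congr 1
    apply Finset.sum_congr rfl
    intro e _
    rw [hUr, ENNReal.ofReal_toReal (hu_ne _)]
  rw [htarget]
  have := conv_real L α hα0 hα1 Ur hUnn t
  have h2 := (ENNReal.continuous_ofReal.tendsto _).comp this
  apply h2.congr
  intro s
  exact (hbridge s).symm
end CONVE




section MEAS

def chi (s : Finset ℕ) : ℕ → Bool := fun i => decide (i ∈ s)

def Dep (N : ℕ) (φ : (ℕ → Bool) → Prop) : Prop :=
  ∀ x y : ℕ → Bool, (∀ i, i < N → x i = y i) → (φ x ↔ φ y)

open Classical in
noncomputable def Ssum (a b : ℝ≥0∞) (N : ℕ) (φ : (ℕ → Bool) → Prop) : ℝ≥0∞ :=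
  ∑ s ∈ (Finset.range N).powerset, if φ (chi s) then a^(s.card) * b^(N - s.card) else 0

lemma meas_eq_Ssum {β : ℝ} {μ : Measure (ℕ → Bool)} (hμ : IsBernoulli β μ)
    (N : ℕ) (φ : (ℕ → Bool) → Prop) (hφ : Dep N φ) :
    μ {x | φ x} = Ssum (ENNReal.ofReal β) (ENNReal.ofReal (1-β)) N φ := by
  classical
  set a := ENNReal.ofReal β
  set b := ENNReal.ofReal (1-β)
  set Cyl : Finset ℕ → Set (ℕ → Bool) := fun s => {x | ∀ i ∈ Finset.range N, x i = chi s i}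
    with hCyl
  have hmeasCyl : ∀ s : Finset ℕ, MeasurableSet (Cyl s) := by
    intro s
    have : Cyl s = ⋂ i ∈ Finset.range N, {x : ℕ → Bool | x i = chi s i} := by
      ext x
      simp [hCyl, Set.mem_iInter]
    rw [this]
    apply MeasurableSet.biInter (Set.to_countable _)
    intro i _
    show MeasurableSet ((fun x : ℕ → Bool => x i) ⁻¹' {chi s i})
    exact measurable_pi_apply i (measurableSet_singleton _)
  have hμCyl : ∀ s ∈ (Finset.range N).powerset,
      μ (Cyl s) = a^(s.card) * b^(N - s.card) := by
    intro s hs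
    rw [Finset.mem_powerset] at hs
    have h0 := hμ.2 (Finset.range N) (chi s)
    rw [hCyl]
    simp only
    rw [h0]
    have h1 : ∀ i ∈ s, (if chi s i = true then a else b) = a := by
      intro i hi
      simp [chi, hi]
    have h2 : ∀ i ∈ Finset.range N \ s, (if chi s i = true then a else b) = b := by
      intro i hi
      simp [chi, (Finset.mem_sdiff.mp hi).2]
    rw [← Finset.prod_sdiff hs, Finset.prod_congr rfl h2, Finset.prod_congr rfl h1,
      Finset.prod_const, Finset.prod_const, Finset.card_sdiff_of_subset hs, Finset.card_range]
    ring
  set T : Finset (Finset ℕ) := (Finset.range N).powerset.filter (fun s => φ (chi s)) with hT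
  have hagree : ∀ x : ℕ → Bool, ∀ i ∈ Finset.range N,
      x i = chi ((Finset.range N).filter (fun i => x i = true)) i := by
    intro x i hi
    cases hx : x i <;> simp [chi, Finset.mem_filter, hi, hx]
  have hunion : {x | φ x} = ⋃ s ∈ T, Cyl s := by
    ext x
    simp only [Set.mem_setOf_eq, Set.mem_iUnion, hT, Finset.mem_filter, Finset.mem_powerset]
    constructor
    · intro hx
      refine ⟨(Finset.range N).filter (fun i => x i = true),
        ⟨Finset.filter_subset _ _, ?_⟩, ?_⟩
      · exact (hφ x _ (fun i hi => hagree x i (Finset.mem_range.mpr hi))).mp hx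
      · intro i hi
        exact hagree x i hi
    · rintro ⟨s, ⟨-, hφs⟩, hxs⟩
      exact (hφ _ x (fun i hi => (hxs i (Finset.mem_range.mpr hi)).symm)).mp hφs
  have hdisj : (T : Set (Finset ℕ)).PairwiseDisjoint Cyl := by
    intro s hs t ht hst
    simp only [Finset.coe_filter, Set.mem_setOf_eq, hT, Finset.mem_filter,
      Finset.mem_powerset] at hs ht
    rw [Function.onFun, Set.disjoint_left]
    intro x hxs hxt
    apply hst
    have hsub_s := hs.1
    have hsub_t := ht.1
    ext i
    by_cases hiN : i ∈ Finset.range N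
    · have e1 := hxs i hiN
      have e2 := hxt i hiN
      have : chi s i = chi t i := by rw [← e1, ← e2]
      simpa [chi] using this
    · constructor
      · intro hi; exact absurd (hsub_s hi) hiN
      · intro hi; exact absurd (hsub_t hi) hiN
  rw [hunion, measure_biUnion_finset hdisj (fun s _ => hmeasCyl s)]
  rw [Finset.sum_congr rfl (fun s hs => hμCyl s (Finset.mem_filter.mp hs).1)]
  rw [Ssum, Finset.sum_filter]

lemma Ssum_congr (a b : ℝ≥0∞) (N : ℕ) (φ φ' : (ℕ → Bool) → Prop)
    (h : ∀ x, φ x ↔ φ' x) : Ssum a b N φ = Ssum a b N φ' := by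
  classical
  apply Finset.sum_congr rfl
  intro s _
  exact if_congr (h _) rfl rfl

lemma Ssum_le (a b : ℝ≥0∞) (N : ℕ) (φ φ' : (ℕ → Bool) → Prop)
    (h : ∀ x, φ x → φ' x) : Ssum a b N φ ≤ Ssum a b N φ' := by
  classical
  apply Finset.sum_le_sum
  intro s _
  split_ifs with h1 h2
  · exact le_rfl
  · exact absurd (h _ h1) h2
  · exact zero_le
  · exact le_rfl

lemma Ssum_rec (a b : ℝ≥0∞) (N : ℕ) (φ : (ℕ → Bool) → Prop) :
    Ssum a b (N+1) φ = Ssum a b N (fun x => φ (Function.update x N false)) * b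
      + Ssum a b N (fun x => φ (Function.update x N true)) * a := by
  classical
  rw [Ssum, Finset.range_add_one, Finset.sum_powerset_insert (by simp)]
  rw [Ssum, Ssum, Finset.sum_mul, Finset.sum_mul]
  congr 1
  · apply Finset.sum_congr rfl
    intro s hs
    rw [Finset.mem_powerset] at hs
    have hNs : N ∉ s := fun h => by simpa using hs h
    have hchi : Function.update (chi s) N false = chi s := by
      funext i
      by_cases hi : i = N
      · subst hi; simp [chi, hNs]
      · simp [Function.update_of_ne hi]
    have hcard : s.card ≤ N := le_trans (Finset.card_le_card hs) (by simp)
    rw [hchi]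
    split_ifs with h1
    · have h3 : N + 1 - s.card = (N - s.card) + 1 := by omega
      rw [h3, pow_succ]
      ring
    · rw [zero_mul]
  · apply Finset.sum_congr rfl
    intro s hs
    rw [Finset.mem_powerset] at hs
    have hNs : N ∉ s := fun h => by simpa using hs h
    have hchi : Function.update (chi s) N true = chi (insert N s) := by
      funext i
      by_cases hi : i = N
      · subst hi; simp [chi]
      · simp [Function.update_of_ne hi, chi, Finset.mem_insert, hi]
    have hcard : s.card ≤ N := le_trans (Finset.card_le_card hs) (by simp)
    rw [hchi]
    split_ifs with h1
    · rw [Finset.card_insert_of_notMem hNs]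
      have h3 : N + 1 - (s.card + 1) = N - s.card := by omega
      rw [h3, pow_succ]
      ring
    · rw [zero_mul]

end MEAS

section ITER
open scoped ENNReal

lemma kpath_congr (N : ℕ) (x y : ℕ → Bool) (h : ∀ i, i < N → x i = y i) :
    kpath x N = kpath y N := by
  unfold kpath
  congr 1
  apply Finset.filter_congr
  intro i hi
  rw [h i (Finset.mem_range.mp hi)]

lemma kpath_update (x : ℕ → Bool) (N : ℕ) (c : Bool) :
    kpath (Function.update x N c) (N+1) = kpath x N + (if c then 1 else 0) := by
  classical
  unfold kpath
  rw [Finset.range_add_one, Finset.filter_insert]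
  have h1 : Finset.filter (fun i => Function.update x N c i = true) (Finset.range N)
      = Finset.filter (fun i => x i = true) (Finset.range N) := by
    apply Finset.filter_congr
    intro i hi
    have hiN : i ≠ N := by
      have := Finset.mem_range.mp hi
      omega
    rw [Function.update_of_ne hiN]
  rw [h1, Function.update_self]
  cases c
  · simp
  · rw [if_pos rfl, if_pos rfl, Finset.card_insert_of_notMem]
    intro hmem
    have := (Finset.mem_filter.mp hmem).1
    exact absurd (Finset.mem_range.mp this) (lt_irrefl N)

def phiP (L : ℕ) (ψ : (ℕ → Bool) → Prop) (M j : ℕ) (t : ZMod L) : (ℕ → Bool) → Prop :=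
  fun x => ψ x ∧ ((kpath x (M+j) : ℕ) : ZMod L) = t

lemma dep_mono (M N : ℕ) (h : M ≤ N) (φ : (ℕ → Bool) → Prop) (hφ : Dep M φ) : Dep N φ :=
  fun x y hxy => hφ x y (fun i hi => hxy i (lt_of_lt_of_le hi h))

lemma dep_kpath_fun (N : ℕ) (g : ℕ → Prop) : Dep N (fun x => g (kpath x N)) := by
  intro x y hxy
  simp only
  rw [kpath_congr N x y hxy]

lemma dep_and (N : ℕ) (φ φ' : (ℕ → Bool) → Prop) (h : Dep N φ) (h' : Dep N φ') :
    Dep N (fun x => φ x ∧ φ' x) :=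
  fun x y hxy => and_congr (h x y hxy) (h' x y hxy)

lemma dep_phiP (L : ℕ) (ψ : (ℕ → Bool) → Prop) (M : ℕ) (hψ : Dep M ψ) (j : ℕ) (t : ZMod L) :
    Dep (M+j) (phiP L ψ M j t) :=
  dep_and _ _ _ (dep_mono M (M+j) (Nat.le_add_right _ _) _ hψ)
    (dep_kpath_fun (M+j) (fun k => ((k : ℕ) : ZMod L) = t))

end ITER

section ITER2
open scoped ENNReal
variable (a b : ℝ≥0∞) (L : ℕ) [NeZero L] (ψ : (ℕ → Bool) → Prop) (M : ℕ)

lemma Ssum_step (hψ : Dep M ψ) (j : ℕ) (t : ZMod L) :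
    Ssum a b (M+(j+1)) (phiP L ψ M (j+1) t)
      = Ssum a b (M+j) (phiP L ψ M j t) * b + Ssum a b (M+j) (phiP L ψ M j (t-1)) * a := by
  have hN : M + (j+1) = (M+j) + 1 := rfl
  rw [hN, Ssum_rec]
  congr 1
  · congr 1
    apply Ssum_congr
    intro x
    unfold phiP
    set N := M + j with hNd
    have hψeq : ψ (Function.update x N false) ↔ ψ x := by
      apply hψ
      intro i hi
      rw [Function.update_of_ne (by omega)]
    have hkp : kpath (Function.update x N false) (N+1) = kpath x N := by
      rw [kpath_update]
      simp
    rw [hψeq]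
    have : M + (j+1) = N + 1 := rfl
    rw [this, hkp]
  · congr 1
    apply Ssum_congr
    intro x
    unfold phiP
    set N := M + j with hNd
    have hψeq : ψ (Function.update x N true) ↔ ψ x := by
      apply hψ
      intro i hi
      rw [Function.update_of_ne (by omega)]
    have hkp : kpath (Function.update x N true) (N+1) = kpath x N + 1 := by
      rw [kpath_update]
      simp
    have h5 : M + (j+1) = N + 1 := rfl
    rw [h5, hψeq, hkp]
    constructor
    · rintro ⟨h6, h7⟩
      refine ⟨h6, ?_⟩
      push_cast at h7
      rw [eq_sub_iff_add_eq]
      exact h7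
    · rintro ⟨h6, h7⟩
      refine ⟨h6, ?_⟩
      push_cast
      rw [eq_sub_iff_add_eq] at h7
      exact h7

lemma Ssum_iter (hψ : Dep M ψ) : ∀ (j : ℕ) (t : ZMod L),
    Ssum a b (M+j) (phiP L ψ M j t)
      = ∑ e : ZMod L, gg a b L j e * Ssum a b (M+0) (phiP L ψ M 0 (t - e)) := by
  intro j
  induction j with
  | zero =>
    intro t
    rw [Finset.sum_eq_single (0 : ZMod L)]
    · simp [gg]
    · intro f _ hf
      simp [gg, hf]
    · simp
  | succ j ih =>
    intro t
    rw [Ssum_step a b L ψ M hψ j t, ih t, ih (t-1), Finset.sum_mul, Finset.sum_mul]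
    have h2 : ∑ e : ZMod L, gg a b L j e * Ssum a b (M+0) (phiP L ψ M 0 (t - 1 - e)) * a
        = ∑ e : ZMod L, gg a b L j (e - 1) * Ssum a b (M+0) (phiP L ψ M 0 (t - e)) * a := by
      apply Fintype.sum_equiv (Equiv.addRight (1 : ZMod L))
      intro e
      simp only [Equiv.coe_addRight, add_sub_cancel_right]
      have h3 : t - 1 - e = t - (e + 1) := by ring
      rw [h3]
    rw [h2, ← Finset.sum_add_distrib]
    apply Finset.sum_congr rfl
    intro e _
    simp only [gg]
    ring

lemma Ssum_phi0_sum : ∑ t : ZMod L, Ssum a b (M+0) (phiP L ψ M 0 t) = Ssum a b (M+0) ψ := by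
  classical
  simp only [Ssum, phiP]
  rw [Finset.sum_comm]
  apply Finset.sum_congr rfl
  intro s _
  by_cases hψs : ψ (chi s)
  · simp only [hψs, true_and, if_pos]
    rw [Finset.sum_ite_eq Finset.univ ((kpath (chi s) (M+0) : ℕ) : ZMod L)]
    simp
  · simp [hψs]

lemma Ssum_fiber (N : ℕ) (Q : ZMod L → Prop) [DecidablePred Q] :
    Ssum a b N (fun x => ψ x ∧ Q ((kpath x N : ℕ) : ZMod L))
      = ∑ t ∈ Finset.univ.filter Q,
          Ssum a b N (fun x => ψ x ∧ ((kpath x N : ℕ) : ZMod L) = t) := by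
  classical
  simp only [Ssum]
  rw [Finset.sum_comm]
  apply Finset.sum_congr rfl
  intro s _
  by_cases hψs : ψ (chi s)
  · by_cases hQ : Q ((kpath (chi s) N : ℕ) : ZMod L)
    · simp only [hψs, true_and, hQ, if_pos]
      rw [Finset.sum_ite_eq (Finset.univ.filter Q) ((kpath (chi s) N : ℕ) : ZMod L)]
      simp [hQ]
    · simp only [hψs, true_and, hQ, if_false]
      rw [Finset.sum_ite_eq (Finset.univ.filter Q) ((kpath (chi s) N : ℕ) : ZMod L)]
      simp [hQ]
  · simp [hψs]
end ITER2



theorem stmt11 (q : ℕ) (hq : q.Prime) (α : ℝ) (hα0 : 0 < α) (hα1 : α < 1)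
    (μ : Measure (ℕ → Bool)) (hμ : IsBernoulli α μ)
    (m : ℕ) (hm : 1 ≤ m) (p r : ℕ) (hp : p ≤ q - 1) (hr : r ≤ q - 1) :
    Tendsto (fun n : ℕ => μ (F q n p ∩ F q m r)) atTop
      (nhds ((q : ENNReal)⁻¹ * μ (F q m r))) := by

  classical
  haveI : Fact q.Prime := ⟨hq⟩
  have hq2 := hq.two_le
  haveI : NeZero (2*q) := ⟨by omega⟩
  haveI := hμ.1
  set M : ℕ := q^m - 2 with hMdef
  have hqm2 : 2 ≤ q^m := le_trans hq2 (le_trans (le_of_eq (pow_one q).symm) (Nat.pow_le_pow_right (by omega) hm))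
  set ψ : (ℕ → Bool) → Prop := fun x => ((dpath (q^m - 2) x : ℕ) : ZMod q) = (r : ZMod q)
    with hψdef
  have hψdep : Dep M ψ := by
    have h := dep_kpath_fun M (fun k => (((q^m - 2).choose k : ℕ) : ZMod q) = (r : ZMod q))
    intro x y hxy
    have h2 := h x y hxy
    simp only at h2
    rw [hψdef]
    simp only
    unfold dpath
    rw [hMdef] at h2
    exact h2
  have hFm : F q m r = {x | ψ x} := rfl
  have hμB : μ (F q m r) = Ssum (ENNReal.ofReal α) (ENNReal.ofReal (1-α)) M ψ := by
    rw [hFm]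
    exact meas_eq_Ssum hμ M ψ hψdep
  set u : ZMod (2*q) → ENNReal :=
    fun e => Ssum (ENNReal.ofReal α) (ENNReal.ofReal (1-α)) (M+0) (phiP (2*q) ψ M 0 e) with hu
  have hu_le : ∀ e, u e ≤ 1 := by
    intro e
    have h1 : u e ≤ Ssum (ENNReal.ofReal α) (ENNReal.ofReal (1-α)) (M+0) (fun _ => True) := by
      rw [hu]
      exact Ssum_le _ _ _ _ _ (fun x _ => trivial)
    have h2 : Ssum (ENNReal.ofReal α) (ENNReal.ofReal (1-α)) (M+0) (fun _ => True) = 1 := by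
      have h3 := meas_eq_Ssum hμ (M+0) (fun _ => True) (fun x y _ => Iff.rfl)
      rw [← h3]
      have : {x : ℕ → Bool | True} = Set.univ := Set.setOf_true
      rw [this, measure_univ]
    rw [← h2]
    exact h1
  have husum : ∑ e : ZMod (2*q), u e = μ (F q m r) := by
    rw [hμB]
    have h0 := Ssum_phi0_sum (ENNReal.ofReal α) (ENNReal.ofReal (1-α)) (2*q) ψ M
    rw [hu]
    rw [h0, Nat.add_zero]
  set Sol : Finset (ZMod (2*q)) :=
    Finset.univ.filter (fun t : ZMod (2*q) => ft q t = (p : ZMod q)) with hSoldef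
  have hSol : Sol.card = 2 := card_sol q p hp
  -- eventual equality
  have hμeq : ∀ n, m ≤ n →
      μ (F q n p ∩ F q m r) = ∑ t ∈ Sol, ∑ e : ZMod (2*q),
        gg (ENNReal.ofReal α) (ENNReal.ofReal (1-α)) (2*q) ((q^n - 2) - M) e * u (t - e) := by
    intro n hmn
    have hn1 : 1 ≤ n := le_trans hm hmn
    have hqn2 : 2 ≤ q^n := le_trans hqm2 (Nat.pow_le_pow_right (by omega) hmn)
    have hMN : M ≤ q^n - 2 := by
      have := Nat.pow_le_pow_right (show 1 ≤ q by omega) hmn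
      omega
    set N : ℕ := q^n - 2 with hNdef
    have hkplt : ∀ x : ℕ → Bool, kpath x N < q^n := by
      intro x
      have h1 : kpath x N ≤ N := le_trans (Finset.card_filter_le _ _) (by rw [Finset.card_range])
      omega
    have hsetEq : F q n p ∩ F q m r
        = {x | ψ x ∧ (fun t : ZMod (2*q) => ft q t = (p : ZMod q)) ((kpath x N : ℕ) : ZMod (2*q))} := by
      ext x
      simp only [Set.mem_inter_iff, Set.mem_setOf_eq, F]
      have hkey : ((dpath (q^n - 2) x : ℕ) : ZMod q)
          = ft q ((kpath x N : ℕ) : ZMod (2*q)) := by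
        unfold dpath
        rw [ft_cast q (kpath x N), keyA q n (kpath x (q^n - 2)) hn1 (hkplt x)]
      rw [hkey]
      constructor
      · rintro ⟨h1, h2⟩; exact ⟨h2, h1⟩
      · rintro ⟨h1, h2⟩; exact ⟨h2, h1⟩
    rw [hsetEq]
    have hdep2 : Dep N (fun x => ψ x ∧
        (fun t : ZMod (2*q) => ft q t = (p : ZMod q)) ((kpath x N : ℕ) : ZMod (2*q))) := by
      apply dep_and
      · exact dep_mono M N hMN ψ hψdep
      · exact dep_kpath_fun N (fun k => ft q ((k : ℕ) : ZMod (2*q)) = (p : ZMod q))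
    rw [meas_eq_Ssum hμ N _ hdep2]
    rw [Ssum_fiber (ENNReal.ofReal α) (ENNReal.ofReal (1-α)) (2*q) ψ N
      (fun t : ZMod (2*q) => ft q t = (p : ZMod q))]
    rw [← hSoldef]
    apply Finset.sum_congr rfl
    intro t _
    have hNj : N = M + (N - M) := by omega
    have h1 : Ssum (ENNReal.ofReal α) (ENNReal.ofReal (1-α)) N
          (fun x => ψ x ∧ ((kpath x N : ℕ) : ZMod (2*q)) = t)
        = Ssum (ENNReal.ofReal α) (ENNReal.ofReal (1-α)) (M + (N - M))
          (phiP (2*q) ψ M (N - M) t) := by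
      unfold phiP
      rw [← hNj]
    rw [h1, Ssum_iter (ENNReal.ofReal α) (ENNReal.ofReal (1-α)) (2*q) ψ M hψdep (N - M) t]
  -- limit
  have hj : Tendsto (fun n : ℕ => (q^n - 2) - M) atTop atTop := by
    apply tendsto_atTop_atTop.mpr
    intro K
    refine ⟨K + 2 + M, fun n hn => ?_⟩
    have h1 : n < q^n := Nat.lt_pow_self (by omega)
    omega
  have hterm : ∀ t : ZMod (2*q), Tendsto (fun n : ℕ => ∑ e : ZMod (2*q),
      gg (ENNReal.ofReal α) (ENNReal.ofReal (1-α)) (2*q) ((q^n - 2) - M) e * u (t - e))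
      atTop (nhds ((∑ e : ZMod (2*q), u e) / ((2*q : ℕ) : ENNReal))) := by
    intro t
    exact (conv_enn (2*q) α hα0 hα1 u hu_le t).comp hj
  have hsum_t : Tendsto (fun n : ℕ => ∑ t ∈ Sol, ∑ e : ZMod (2*q),
      gg (ENNReal.ofReal α) (ENNReal.ofReal (1-α)) (2*q) ((q^n - 2) - M) e * u (t - e))
      atTop (nhds (∑ _t ∈ Sol, (∑ e : ZMod (2*q), u e) / ((2*q : ℕ) : ENNReal))) :=
    tendsto_finset_sum Sol (fun t _ => hterm t)
  have hval : (∑ _t ∈ Sol, (∑ e : ZMod (2*q), u e) / ((2*q : ℕ) : ENNReal))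
      = (q : ENNReal)⁻¹ * μ (F q m r) := by
    rw [Finset.sum_const, hSol, husum]
    have hcast : ((2*q : ℕ) : ENNReal) = 2 * (q : ENNReal) := by push_cast; ring
    rw [hcast]
    rw [ENNReal.div_eq_inv_mul, ENNReal.mul_inv (Or.inl two_ne_zero) (Or.inl ENNReal.ofNat_ne_top)]
    rw [nsmul_eq_mul, mul_assoc, ← mul_assoc, ← mul_assoc]
    norm_num
    rw [ENNReal.mul_inv_cancel two_ne_zero ENNReal.ofNat_ne_top, one_mul]
  rw [← hval]
  apply hsum_t.congr'
  rw [Filter.eventuallyEq_iff_exists_mem]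
  exact ⟨{n | m ≤ n}, mem_atTop m, fun n hn => (hμeq n hn).symm⟩
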